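/- If Q is an abstract key polynomial for w, then the Q-truncation w_Q is a valuation on K(X); that is, w_Q(fg) = w_Q(f) + w_Q(g) and w_Q(f+g) ≥ min(w_Q(f), w_Q(g)) for all f, g ∈ K[X]. -/

import Mathlib

namespace MLV

open Polynomial

/-- An additive valuation on a commutative ring `R` with values in `Γ ∪ {∞}`
(written additively, with the `min` convention), thought of as the restriction
to `R` of a valuation on its fraction field. -/
structure ValOn (R : Type*) [CommRing R] (Γ : Type*) [AddCommGroup Γ] [LinearOrder Γ] [IsOrderedAddMonoid Γ] where
  toFun : R → WithTop Γ
  map_zero' : toFun 0 = ⊤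
  ne_top' : ∀ f : R, f ≠ 0 → toFun f ≠ ⊤
  map_mul' : ∀ f g : R, toFun (f * g) = toFun f + toFun g
  add_min' : ∀ f g : R, min (toFun f) (toFun g) ≤ toFun (f + g)

variable {K : Type*} [Field K] {Γ : Type*} [AddCommGroup Γ] [LinearOrder Γ] [IsOrderedAddMonoid Γ]

/-- `w` (a valuation on `K(X)`, restricted to `K[X]`) extends the valuation `v` of `K`. -/
def Extends (w : ValOn (Polynomial K) Γ) (v : ValOn K Γ) : Prop :=
  ∀ c : K, w.toFun (C c) = v.toFun c

/-- `wbar` (a valuation on `K̄(X)`) is a common extension of `w` and of `vbar`. -/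
def IsCommonExt {L : Type*} [Field L] [Algebra K L]
    (wbar : ValOn (Polynomial L) Γ) (w : ValOn (Polynomial K) Γ) (vbar : ValOn L Γ) : Prop :=
  (∀ f : Polynomial K, wbar.toFun (f.map (algebraMap K L)) = w.toFun f) ∧
  (∀ c : L, wbar.toFun (C c) = vbar.toFun c)

/-- `δ(f) = max { w̄(X - α) : α ∈ K̄, f(α) = 0 }` (as an element of `WithBot (WithTop Γ)`,
the value `⊥` corresponding to a polynomial without roots). -/
noncomputable def delta {L : Type*} [Field L] [Algebra K L]
    (wbar : ValOn (Polynomial L) Γ) (f : Polynomial K) : WithBot (WithTop Γ) :=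
  (((f.map (algebraMap K L)).roots).map
    fun α => ((wbar.toFun (X - C α) : WithTop Γ) : WithBot (WithTop Γ))).sup

/-- `Q` is an abstract key polynomial for `w` (with respect to the common extension `wbar`
computing `δ`): `Q` is monic and `δ(f) < δ(Q)` for every nonzero `f` with `deg f < deg Q`. -/
def IsABKP {L : Type*} [Field L] [Algebra K L]
    (wbar : ValOn (Polynomial L) Γ) (Q : Polynomial K) : Prop :=
  Q.Monic ∧ ∀ f : Polynomial K, f ≠ 0 → f.degree < Q.degree → delta wbar f < delta wbar Q

/-- The `Q`-truncation `w_Q` of `w`: on the `Q`-expansion `f = ∑ fᵢ Qⁱ` it equals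
`min_i w(fᵢ Qⁱ)`. -/
noncomputable def truncVal (w : ValOn (Polynomial K) Γ) (Q f : Polynomial K) : WithTop Γ :=
  (Finset.range (f.natDegree + 1)).inf fun i => w.toFun ((f /ₘ Q ^ i) %ₘ Q * Q ^ i)

/-- `f ∼_u g` : `u(f - g) > u f = u g`. -/
def EquivMod (u : Polynomial K → WithTop Γ) (f g : Polynomial K) : Prop :=
  u f < u (f - g) ∧ u f = u g

/-- `f ∣_u g` : `g ∼_u f h` for some `h`. -/
def DvdMod (u : Polynomial K → WithTop Γ) (f g : Polynomial K) : Prop :=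
  ∃ h : Polynomial K, EquivMod u g (f * h)

/-- A key polynomial for `u`: monic, `u`-irreducible and `u`-minimal. -/
def IsKeyPol (u : Polynomial K → WithTop Γ) (φ : Polynomial K) : Prop :=
  φ.Monic ∧
  (∀ h q : Polynomial K, DvdMod u φ (h * q) → DvdMod u φ h ∨ DvdMod u φ q) ∧
  (∀ h : Polynomial K, h ≠ 0 → DvdMod u φ h → φ.degree ≤ h.degree)

/-- A key polynomial for `u` of minimal degree (i.e. of degree `deg(u)`). -/
def IsMinKeyPol (u : Polynomial K → WithTop Γ) (φ : Polynomial K) : Prop :=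
  IsKeyPol u φ ∧ ∀ ψ : Polynomial K, IsKeyPol u ψ → φ.degree ≤ ψ.degree

/-- `u ≤ u'` pointwise on `K[X]`. -/
def FnLe (u u' : Polynomial K → WithTop Γ) : Prop :=
  ∀ f : Polynomial K, u f ≤ u' f

/-- `u < u'` : `u ≤ u'` and `u f < u' f` for some `f`. -/
def FnLt (u u' : Polynomial K → WithTop Γ) : Prop :=
  FnLe u u' ∧ ∃ f : Polynomial K, u f < u' f

/-- `g ∈ Φ(u, u')` : `g` is monic of minimal degree with `u g < u' g`. -/
def InPhi (u u' : Polynomial K → WithTop Γ) (g : Polynomial K) : Prop :=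
  g.Monic ∧ u g < u' g ∧
  ∀ h : Polynomial K, h.Monic → u h < u' h → g.degree ≤ h.degree

/-- The value at `f` of the augmented valuation `[u; φ, γ]`, computed via the
`φ`-expansion `f = ∑ fᵢ φⁱ` as `min_i (u fᵢ + i γ)`. -/
noncomputable def augVal (u : Polynomial K → WithTop Γ) (φ : Polynomial K) (γ : Γ)
    (f : Polynomial K) : WithTop Γ :=
  (Finset.range (f.natDegree + 1)).inf
    fun i => u ((f /ₘ φ ^ i) %ₘ φ) + i • ((γ : WithTop Γ))

/-- `u' = [u; φ, γ]` is the ordinary augmentation of `u` at the key polynomial `φ`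
with value `γ > u φ`. -/
def IsOrdAug (u : Polynomial K → WithTop Γ) (φ : Polynomial K) (γ : Γ)
    (u' : Polynomial K → WithTop Γ) : Prop :=
  IsKeyPol u φ ∧ u φ < (γ : WithTop Γ) ∧ ∀ f : Polynomial K, u' f = augVal u φ γ f

/-- A continuous family of augmentations `(ρ_i = [w'; χ_i, γ_i])_{i ∈ ι}` of `w'`. -/
structure ContFamily (w' : ValOn (Polynomial K) Γ) (ι : Type*) [LinearOrder ι] where
  chi : ι → Polynomial K
  gam : ι → Γ
  rho : ι → ValOn (Polynomial K) Γ
  no_last : ∀ i : ι, ∃ j : ι, i < j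
  gam_mono : StrictMono gam
  aug : ∀ i : ι, IsOrdAug w'.toFun (chi i) (gam i) (rho i).toFun
  deg_eq : ∀ i j : ι, (chi i).degree = (chi j).degree
  key_step : ∀ i j : ι, i < j → IsKeyPol (rho i).toFun (chi j)
  not_equiv : ∀ i j : ι, i < j → ¬ EquivMod (rho i).toFun (chi j) (chi i)
  step : ∀ i j : ι, i < j → IsOrdAug (rho i).toFun (chi j) (gam j) (rho j).toFun

/-- `f` is `W`-stable with stable value `c`. -/
def StableAt {w' : ValOn (Polynomial K) Γ} {ι : Type*} [LinearOrder ι]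
    (F : ContFamily w' ι) (f : Polynomial K) (c : WithTop Γ) : Prop :=
  ∃ i0 : ι, ∀ i : ι, i0 ≤ i → (F.rho i).toFun f = c

/-- `f` is `W`-stable. -/
def IsStable {w' : ValOn (Polynomial K) Γ} {ι : Type*} [LinearOrder ι]
    (F : ContFamily w' ι) (f : Polynomial K) : Prop :=
  ∃ c : WithTop Γ, StableAt F f c

/-- The valuation `w` is the stable limit of the family `F`. -/
def IsStableLimit {w' : ValOn (Polynomial K) Γ} {ι : Type*} [LinearOrder ι]
    (F : ContFamily w' ι) (w : ValOn (Polynomial K) Γ) : Prop :=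
  ∀ f : Polynomial K, StableAt F f (w.toFun f)

/-- `Q` is a MacLane–Vaquié limit key polynomial for `F`: monic, `F`-unstable,
of minimal degree among unstable polynomials. -/
def IsLimitKP {w' : ValOn (Polynomial K) Γ} {ι : Type*} [LinearOrder ι]
    (F : ContFamily w' ι) (Q : Polynomial K) : Prop :=
  Q.Monic ∧ ¬ IsStable F Q ∧ ∀ g : Polynomial K, ¬ IsStable F g → Q.degree ≤ g.degree

/-- The continuous family `F` is essential: `deg(W) < m_∞ < ∞`. -/
def IsEssential {w' : ValOn (Polynomial K) Γ} {ι : Type*} [LinearOrder ι]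
    (F : ContFamily w' ι) : Prop :=
  (∃ f : Polynomial K, ¬ IsStable F f) ∧
  ∀ (i : ι) (f : Polynomial K), ¬ IsStable F f → (F.chi i).degree < f.degree

/-- `w = [F; Q, γ]` is the limit augmentation of the family `F` at the limit key
polynomial `Q` with value `γ`: on `Q`-expansions, `w f = min_i (ρ_W(fᵢ) + iγ)`, which
since the coefficients are stable is the eventual value of `[ρ_i; Q, γ]` on `f`. -/
def IsLimitAug {w' : ValOn (Polynomial K) Γ} {ι : Type*} [LinearOrder ι]
    (F : ContFamily w' ι) (Q : Polynomial K) (γ : Γ)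
    (w : ValOn (Polynomial K) Γ) : Prop :=
  IsLimitKP F Q ∧ (∀ i : ι, (F.rho i).toFun Q < (γ : WithTop Γ)) ∧
  ∀ f : Polynomial K, ∃ i0 : ι, ∀ i : ι, i0 ≤ i → w.toFun f = augVal (F.rho i).toFun Q γ f

/-- `w` is a depth-zero valuation `w_{α,δ}` over `v`. -/
def IsDepthZero (v : ValOn K Γ) (w : ValOn (Polynomial K) Γ) : Prop :=
  ∃ (α : K) (d : Γ), ∀ f : Polynomial K,
    w.toFun f = (Finset.range (f.natDegree + 1)).inf
      fun i => v.toFun (((Polynomial.taylor α) f).coeff i) + i • ((d : WithTop Γ))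

/-- An ordinary augmentation step of a MacLane–Vaquié chain:
`u' = [u; φ, γ]` with `deg(u) < deg Φ(u, u')`. -/
def OrdMLVStep (u u' : Polynomial K → WithTop Γ) (φ : Polynomial K) (γ : Γ) : Prop :=
  IsOrdAug u φ γ u' ∧
  ∀ ψ g : Polynomial K, IsMinKeyPol u ψ → InPhi u u' g → ψ.degree < g.degree

/-- A limit augmentation step of a MacLane–Vaquié chain, with the underlying essential
continuous family `F` made explicit: `w = [F; φ, γ]`, `deg(w') = deg Φ(w', w)` and
`φprev ∉ Φ(w', w)`. -/
def LimMLVStepWith {w' : ValOn (Polynomial K) Γ} {ι : Type*} [LinearOrder ι]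
    (F : ContFamily w' ι) (w : ValOn (Polynomial K) Γ)
    (φprev φ : Polynomial K) (γ : Γ) : Prop :=
  IsEssential F ∧ IsLimitAug F φ γ w ∧
  (∀ ψ g : Polynomial K, IsMinKeyPol w'.toFun ψ → InPhi w'.toFun w.toFun g →
    ψ.degree = g.degree) ∧
  ¬ InPhi w'.toFun w.toFun φprev

/-- A limit augmentation step of a MacLane–Vaquié chain (the underlying essential
continuous family being existentially quantified). -/
def LimMLVStep (w' w : ValOn (Polynomial K) Γ) (φprev φ : Polynomial K) (γ : Γ) : Prop :=
  ∃ (ι : Type) (li : LinearOrder ι) (F : @ContFamily K _ Γ _ _ _ w' ι li),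
    @LimMLVStepWith K _ Γ _ _ _ w' ι li F w φprev φ γ

/-- Membership in the index set `I`: `I = ℕ` if `o = none`, and `I = {0, …, N}`
if `o = some N`. -/
def InIdx (o : Option ℕ) (j : ℕ) : Prop :=
  ∀ N : ℕ, o = some N → j ≤ N

/-- An induced complete sequence `{Q_i}_{i ∈ Δ}` of abstract key polynomials for `w`:
a complete sequence of ABKPs, organized in blocks `Δ_j = {j} ∪ ϑ_j` (for `j` in
`I = {0,…,N}` or `I = ℕ`), satisfying the properties of Remark 1.3.  Here `blk i`
is the block of an index `i ∈ Δ`, `main j ∈ Δ` is the distinguished first element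
of the block `Δ_j`, and `ϑ_j = {i ∈ Δ | blk i = j, i ≠ main j}`. -/
structure ICS {L : Type*} [Field L] [Algebra K L]
    (wbar : ValOn (Polynomial L) Γ) (w : ValOn (Polynomial K) Γ)
    (Δ : Type*) [LinearOrder Δ] where
  Q : Δ → Polynomial K
  abkp : ∀ i : Δ, IsABKP wbar (Q i)
  wf : WellFoundedLT Δ
  delta_mono : ∀ i i' : Δ, i < i' → delta wbar (Q i) < delta wbar (Q i')
  wval_mono : ∀ i i' : Δ, i < i' → w.toFun (Q i) < w.toFun (Q i')
  complete : ∀ f : Polynomial K, f ≠ 0 →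
    ∃ i : Δ, (Q i).degree ≤ f.degree ∧ truncVal w (Q i) f = w.toFun f
  Ifin : Option ℕ
  blk : Δ → ℕ
  main : ℕ → Δ
  blk_mono : ∀ i i' : Δ, i ≤ i' → blk i ≤ blk i'
  blk_mem : ∀ i : Δ, InIdx Ifin (blk i)
  blk_main : ∀ j : ℕ, InIdx Ifin j → blk (main j) = j
  main_min : ∀ (j : ℕ) (i : Δ), blk i = j → main j ≤ i
  theta_no_last : ∀ i : Δ, i ≠ main (blk i) →
    ∃ i' : Δ, blk i' = blk i ∧ i' ≠ main (blk i) ∧ i < i'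
  deg_blk_eq : ∀ i i' : Δ, blk i = blk i' → (Q i).degree = (Q i').degree
  deg_blk_lt : ∀ i i' : Δ, blk i < blk i' → (Q i).degree < (Q i').degree
  degQ0 : (Q (main 0)).degree = 1



section Aux

variable {Γ : Type*} [AddCommGroup Γ] [LinearOrder Γ] [IsOrderedAddMonoid Γ]

namespace ValOn

variable {R : Type*} [CommRing R] [Nontrivial R] (V : ValOn R Γ)

lemma map_one : V.toFun 1 = 0 := by
  have h := V.map_mul' 1 1
  rw [mul_one] at h
  have hne := V.ne_top' 1 one_ne_zero
  lift V.toFun 1 to Γ using hne with a ha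
  rw [← WithTop.coe_add, WithTop.coe_inj] at h
  have : a + 0 = a + a := by rw [add_zero]; exact h
  have := add_left_cancel this
  exact_mod_cast congrArg (fun x : Γ => ((x : WithTop Γ))) this.symm

lemma map_neg_one : V.toFun (-1) = 0 := by
  have h := V.map_mul' (-1) (-1)
  rw [neg_one_mul, neg_neg, V.map_one] at h
  have hne := V.ne_top' (-1 : R) (by simp)
  lift V.toFun (-1 : R) to Γ using hne with a ha
  rw [← WithTop.coe_add] at h
  have h2 : a + a = 0 := by exact_mod_cast h.symm
  have h3 : a = 0 := by
    rcases lt_trichotomy a 0 with h' | h' | h'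
    · have h4 : a + a < a + 0 := add_lt_add_right h' a
      rw [add_zero] at h4
      exact absurd h2 (ne_of_lt (h4.trans h'))
    · exact h'
    · have h4 : a + 0 < a + a := add_lt_add_right h' a
      rw [add_zero] at h4
      exact absurd h2 (ne_of_gt (h'.trans h4))
  rw [h3]; rfl

lemma map_neg (x : R) : V.toFun (-x) = V.toFun x := by
  rw [← neg_one_mul, V.map_mul', V.map_neg_one, zero_add]

lemma map_add_of_lt {x y : R} (h : V.toFun x < V.toFun y) :
    V.toFun (x + y) = V.toFun x := by
  have h1 : V.toFun x ≤ V.toFun (x + y) := by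
    have h' := V.add_min' x y
    rwa [min_eq_left h.le] at h'
  refine le_antisymm ?_ h1
  have h2 : x = (x + y) + (-y) := by ring
  have h3 := V.add_min' (x + y) (-y)
  rw [← h2, V.map_neg] at h3
  rcases min_le_iff.mp h3 with h4 | h4
  · exact h4
  · exact absurd h4 (not_le.mpr h)

lemma map_multiset_prod (s : Multiset R) :
    V.toFun s.prod = (s.map V.toFun).sum := by
  induction s using Multiset.induction_on with
  | empty => simpa using V.map_one
  | cons a t ih => simp [Multiset.prod_cons, V.map_mul', ih]

lemma inf_le_sum {ι : Type*} (s : Finset ι) (f : ι → R) :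
    s.inf (fun i => V.toFun (f i)) ≤ V.toFun (∑ i ∈ s, f i) := by
  classical
  induction s using Finset.induction_on with
  | empty => simp [V.map_zero']
  | insert a s ha ih =>
    rw [Finset.sum_insert ha, Finset.inf_insert]
    refine le_trans ?_ (V.add_min' _ _)
    exact min_le_min le_rfl ih

end ValOn

lemma minWT_add {a b c : WithTop Γ} : min a b + c = min (a + c) (b + c) := by
  rcases le_total a b with h | h
  · rw [min_eq_left h, min_eq_left (add_le_add_left h c)]
  · rw [min_eq_right h, min_eq_right (add_le_add_left h c)]

lemma inf_addWT {ι : Type*} (s : Finset ι) (f : ι → WithTop Γ) (c : WithTop Γ) :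
    s.inf f + c = s.inf fun i => f i + c := by
  classical
  induction s using Finset.induction_on with
  | empty => simp
  | insert a s ha ih =>
    rw [Finset.inf_insert, Finset.inf_insert, ← ih, minWT_add]

lemma inf_range_succ_zero {α : Type*} [SemilatticeInf α] [OrderTop α] (t : ℕ → α) (N : ℕ) :
    (Finset.range (N + 1)).inf t = t 0 ⊓ (Finset.range N).inf (fun i => t (i + 1)) := by
  induction N with
  | zero => simp
  | succ n ih =>
    rw [Finset.range_add_one, Finset.inf_insert, ih,
      Finset.range_add_one (n := n), Finset.inf_insert, inf_left_comm]

lemma multiset_exists_sup {α : Type*} [LinearOrder α] [OrderBot α]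
    (s : Multiset α) (h : s ≠ 0) : ∃ b ∈ s, s.sup = b := by
  induction s using Multiset.induction_on with
  | empty => exact absurd rfl h
  | cons a t ih =>
    by_cases ht : t = 0
    · subst ht
      exact ⟨a, Multiset.mem_cons_self a 0, by simp⟩
    · obtain ⟨b, hb, hbs⟩ := ih ht
      rcases le_total a b with h' | h'
      · exact ⟨b, Multiset.mem_cons_of_mem hb, by rw [Multiset.sup_cons, hbs, sup_eq_right.mpr h']⟩
      · exact ⟨a, Multiset.mem_cons_self a t, by rw [Multiset.sup_cons, hbs, sup_eq_left.mpr h']⟩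

section Gauss

open Polynomial

variable {L : Type*} [Field L] (vb : ValOn L Γ) (d : Γ)

/-- weight `j • d` as an element of `WithTop Γ`. -/
noncomputable def wtt (j : ℕ) : WithTop Γ := ((j • d : Γ) : WithTop Γ)

lemma wtt_zero : wtt d 0 = 0 := by simp [wtt]

lemma wtt_add (i j : ℕ) : wtt d (i + j) = wtt d i + wtt d j := by
  simp [wtt, add_nsmul]

lemma wtt_ne_top (j : ℕ) : wtt d j ≠ ⊤ := WithTop.coe_ne_top

/-- the monomial (Gauss) valuation with weight `d` on the variable. -/
noncomputable def UU (p : Polynomial L) : WithTop Γ :=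
  (Finset.range (p.natDegree + 1)).inf fun j => vb.toFun (p.coeff j) + wtt d j

lemma UU_le (p : Polynomial L) (j : ℕ) :
    UU vb d p ≤ vb.toFun (p.coeff j) + wtt d j := by
  by_cases hj : j ≤ p.natDegree
  · exact Finset.inf_le (Finset.mem_range.mpr (Nat.lt_succ_of_le hj))
  · rw [coeff_eq_zero_of_natDegree_lt (not_le.mp hj), vb.map_zero', top_add]
    exact le_top

lemma UU_eq_inf (p : Polynomial L) {N : ℕ} (h : p.natDegree < N) :
    UU vb d p = (Finset.range N).inf fun j => vb.toFun (p.coeff j) + wtt d j := by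
  refine le_antisymm (Finset.le_inf fun j _ => UU_le vb d p j) (Finset.le_inf fun j hj => ?_)
  exact Finset.inf_le (Finset.mem_range.mpr (lt_of_lt_of_le (Finset.mem_range.mp hj) h))

lemma UU_zero : UU vb d 0 = ⊤ := by
  simp [UU, vb.map_zero']

lemma UU_ne_top {p : Polynomial L} (hp : p ≠ 0) : UU vb d p ≠ ⊤ := by
  have h1 : UU vb d p ≤ vb.toFun (p.coeff p.natDegree) + wtt d p.natDegree := UU_le vb d p _
  have h2 : vb.toFun (p.coeff p.natDegree) + wtt d p.natDegree ≠ ⊤ :=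
    WithTop.add_ne_top.mpr ⟨vb.ne_top' _ (by rwa [← leadingCoeff, leadingCoeff_ne_zero]),
      wtt_ne_top d _⟩
  exact ne_top_of_le_ne_top h2 h1

lemma UU_C (c : L) : UU vb d (C c) = vb.toFun c := by
  simp [UU, natDegree_C, wtt_zero]

lemma UU_min_le_add (p q : Polynomial L) :
    min (UU vb d p) (UU vb d q) ≤ UU vb d (p + q) := by
  rw [UU_eq_inf vb d (p + q)
    (lt_of_le_of_lt (natDegree_add_le p q) (Nat.lt_succ_of_le (le_refl _)))]
  refine Finset.le_inf fun j _ => ?_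
  calc min (UU vb d p) (UU vb d q)
      ≤ min (vb.toFun (p.coeff j) + wtt d j) (vb.toFun (q.coeff j) + wtt d j) :=
        min_le_min (UU_le vb d p j) (UU_le vb d q j)
    _ = min (vb.toFun (p.coeff j)) (vb.toFun (q.coeff j)) + wtt d j := (minWT_add).symm
    _ ≤ vb.toFun ((p + q).coeff j) + wtt d j := by
        rw [coeff_add]; exact add_le_add_left (vb.add_min' _ _) _

lemma UU_strict {p : Polynomial L} (hp : p ≠ 0) :
    ∃ i0 : ℕ, p.coeff i0 ≠ 0 ∧ vb.toFun (p.coeff i0) + wtt d i0 = UU vb d p ∧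
      ∀ i : ℕ, i < i0 → UU vb d p < vb.toFun (p.coeff i) + wtt d i := by
  classical
  set T : ℕ → WithTop Γ := fun j => vb.toFun (p.coeff j) + wtt d j with hT
  have hne : (Finset.range (p.natDegree + 1)).Nonempty := ⟨0, by simp⟩
  obtain ⟨j, hj, hjeq⟩ := Finset.exists_mem_eq_inf (Finset.range (p.natDegree + 1)) hne T
  set S := (Finset.range (p.natDegree + 1)).filter (fun i => T i = UU vb d p) with hS
  have hSne : S.Nonempty := ⟨j, Finset.mem_filter.mpr ⟨hj, hjeq.symm⟩⟩
  set i0 := S.min' hSne with hi0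
  have hmem : i0 ∈ Finset.range (p.natDegree + 1) ∧ T i0 = UU vb d p :=
    Finset.mem_filter.mp (S.min'_mem hSne)
  refine ⟨i0, ?_, hmem.2, ?_⟩
  · intro hc
    have : T i0 = ⊤ := by rw [hT]; simp only [hc, vb.map_zero', top_add]
    exact UU_ne_top vb d hp (by rw [← hmem.2, this])
  · intro i hi
    have hirange : i ∈ Finset.range (p.natDegree + 1) := by
      have h := Finset.mem_range.mp hmem.1
      exact Finset.mem_range.mpr (by omega)
    have h1 : UU vb d p ≤ T i := Finset.inf_le hirange
    rcases lt_or_eq_of_le h1 with h' | h'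
    · exact h'
    · exact absurd (S.min'_le i (Finset.mem_filter.mpr ⟨hirange, h'.symm⟩))
        (not_le.mpr hi)

lemma UU_mul (p q : Polynomial L) : UU vb d (p * q) = UU vb d p + UU vb d q := by
  classical
  by_cases hp : p = 0
  · simp [hp, UU_zero, top_add]
  by_cases hq : q = 0
  · simp [hq, UU_zero, add_top]
  obtain ⟨i0, hpc, hpeq, hplt⟩ := UU_strict vb d hp
  obtain ⟨j0, hqc, hqeq, hqlt⟩ := UU_strict vb d hq
  have hge : UU vb d p + UU vb d q ≤ UU vb d (p * q) := by
    refine Finset.le_inf fun k _ => ?_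
    rw [coeff_mul]
    have h1 : (Finset.HasAntidiagonal.antidiagonal k).inf
        (fun ij => vb.toFun (p.coeff ij.1 * q.coeff ij.2)) ≤
        vb.toFun (∑ ij ∈ Finset.HasAntidiagonal.antidiagonal k, p.coeff ij.1 * q.coeff ij.2) :=
      vb.inf_le_sum _ _
    have h2 : UU vb d p + UU vb d q ≤
        (Finset.HasAntidiagonal.antidiagonal k).inf
          (fun ij => vb.toFun (p.coeff ij.1 * q.coeff ij.2)) + wtt d k := by
      rw [inf_addWT]
      refine Finset.le_inf fun ij hij => ?_
      have hk : ij.1 + ij.2 = k := Finset.HasAntidiagonal.mem_antidiagonal.mp hij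
      rw [vb.map_mul', ← hk, wtt_add]
      calc UU vb d p + UU vb d q
          ≤ (vb.toFun (p.coeff ij.1) + wtt d ij.1) +
            (vb.toFun (q.coeff ij.2) + wtt d ij.2) :=
            add_le_add (UU_le vb d p ij.1) (UU_le vb d q ij.2)
        _ = vb.toFun (p.coeff ij.1) + vb.toFun (q.coeff ij.2) +
            (wtt d ij.1 + wtt d ij.2) := by
            rw [add_add_add_comm]
    exact le_trans h2 (add_le_add_left h1 _)
  have hle : UU vb d (p * q) ≤ UU vb d p + UU vb d q := by
    have hsum : UU vb d p + UU vb d q =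
        vb.toFun (p.coeff i0) + vb.toFun (q.coeff j0) + wtt d (i0 + j0) := by
      rw [← hpeq, ← hqeq, wtt_add, add_add_add_comm]
    have hAne : vb.toFun (p.coeff i0 * q.coeff j0) ≠ ⊤ := by
      rw [vb.map_mul']
      exact WithTop.add_ne_top.mpr ⟨vb.ne_top' _ hpc, vb.ne_top' _ hqc⟩
    have hmem : ((i0, j0) : ℕ × ℕ) ∈ Finset.HasAntidiagonal.antidiagonal (i0 + j0) :=
      Finset.HasAntidiagonal.mem_antidiagonal.mpr rfl
    have hrest : ∀ ij ∈ (Finset.HasAntidiagonal.antidiagonal (i0 + j0)).erase (i0, j0),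
        vb.toFun (p.coeff i0 * q.coeff j0) < vb.toFun (p.coeff ij.1 * q.coeff ij.2) := by
      intro ij hij
      obtain ⟨hne, hmem'⟩ := Finset.mem_erase.mp hij
      have hk : ij.1 + ij.2 = i0 + j0 := Finset.HasAntidiagonal.mem_antidiagonal.mp hmem'
      have key : UU vb d p + UU vb d q <
          vb.toFun (p.coeff ij.1) + vb.toFun (q.coeff ij.2) + wtt d (i0 + j0) := by
        rcases Nat.lt_or_ge ij.1 i0 with h' | h'
        · have h1 : UU vb d p < vb.toFun (p.coeff ij.1) + wtt d ij.1 := hplt _ h'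
          have h2 : UU vb d q ≤ vb.toFun (q.coeff ij.2) + wtt d ij.2 := UU_le vb d q _
          calc UU vb d p + UU vb d q
              < (vb.toFun (p.coeff ij.1) + wtt d ij.1) + UU vb d q :=
                WithTop.add_lt_add_right (UU_ne_top vb d hq) h1
            _ ≤ (vb.toFun (p.coeff ij.1) + wtt d ij.1) +
                (vb.toFun (q.coeff ij.2) + wtt d ij.2) := add_le_add_right h2 _
            _ = vb.toFun (p.coeff ij.1) + vb.toFun (q.coeff ij.2) +
                (wtt d ij.1 + wtt d ij.2) := by rw [add_add_add_comm]
            _ = _ := by rw [← wtt_add, hk]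
        · have hj2 : ij.2 < j0 := by
            rcases lt_or_eq_of_le h' with h'' | h''
            · omega
            · exfalso; apply hne
              have : ij.2 = j0 := by omega
              exact Prod.ext h''.symm this
          have h1 : UU vb d q < vb.toFun (q.coeff ij.2) + wtt d ij.2 := hqlt _ hj2
          have h2 : UU vb d p ≤ vb.toFun (p.coeff ij.1) + wtt d ij.1 := UU_le vb d p _
          calc UU vb d p + UU vb d q
              < UU vb d p + (vb.toFun (q.coeff ij.2) + wtt d ij.2) :=
                WithTop.add_lt_add_left (UU_ne_top vb d hp) h1
            _ ≤ (vb.toFun (p.coeff ij.1) + wtt d ij.1) +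
                (vb.toFun (q.coeff ij.2) + wtt d ij.2) := add_le_add_left h2 _
            _ = vb.toFun (p.coeff ij.1) + vb.toFun (q.coeff ij.2) +
                (wtt d ij.1 + wtt d ij.2) := by rw [add_add_add_comm]
            _ = _ := by rw [← wtt_add, hk]
      rw [hsum] at key
      have := (WithTop.add_lt_add_iff_right (wtt_ne_top d (i0 + j0))).mp key
      rw [vb.map_mul', vb.map_mul']
      exact this
    have hcoeff : vb.toFun ((p * q).coeff (i0 + j0)) =
        vb.toFun (p.coeff i0 * q.coeff j0) := by
      rw [coeff_mul, ← Finset.add_sum_erase _ _ hmem]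
      refine vb.map_add_of_lt ?_
      have h1 : ((Finset.HasAntidiagonal.antidiagonal (i0 + j0)).erase (i0, j0)).inf
          (fun ij => vb.toFun (p.coeff ij.1 * q.coeff ij.2)) ≤
          vb.toFun (∑ ij ∈ (Finset.HasAntidiagonal.antidiagonal (i0 + j0)).erase (i0, j0),
            p.coeff ij.1 * q.coeff ij.2) := vb.inf_le_sum _ _
      refine lt_of_lt_of_le ?_ h1
      exact (Finset.lt_inf_iff (lt_top_iff_ne_top.mpr hAne)).mpr hrest
    calc UU vb d (p * q) ≤ vb.toFun ((p * q).coeff (i0 + j0)) + wtt d (i0 + j0) :=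
          UU_le vb d _ _
      _ = vb.toFun (p.coeff i0 * q.coeff j0) + wtt d (i0 + j0) := by rw [hcoeff]
      _ = UU vb d p + UU vb d q := by rw [vb.map_mul', hsum]
  exact le_antisymm hle hge

/-- the monomial valuation centered at `a` with weight `d`, as a `ValOn`. -/
noncomputable def uVal (a : L) : ValOn (Polynomial L) Γ where
  toFun f := UU vb d (taylor a f)
  map_zero' := by rw [map_zero]; exact UU_zero vb d
  ne_top' f hf := UU_ne_top vb d (fun h => hf (taylor_injective a (by rw [h, map_zero])))
  map_mul' f g := by rw [taylor_mul]; exact UU_mul vb d _ _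
  add_min' f g := by rw [map_add]; exact UU_min_le_add vb d _ _

end Gauss

end Aux


section Trunc

open Polynomial

variable {K : Type*} [Field K] {Γ : Type*} [AddCommGroup Γ] [LinearOrder Γ] [IsOrderedAddMonoid Γ]
variable (w : ValOn (Polynomial K) Γ) (Q : Polynomial K)

/-- the `i`-th term in the defining min of `truncVal`. -/
noncomputable def tterm (f : Polynomial K) (i : ℕ) : WithTop Γ :=
  w.toFun ((f /ₘ Q ^ i) %ₘ Q * Q ^ i)

lemma truncVal_eq_inf_tterm (f : Polynomial K) :
    truncVal w Q f = (Finset.range (f.natDegree + 1)).inf (tterm w Q f) := rfl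

lemma tterm_top (hQ : Q.Monic) (hd : 1 ≤ Q.natDegree) (f : Polynomial K) {i : ℕ}
    (hi : f.natDegree < i) : tterm w Q f i = ⊤ := by
  have h0 : f /ₘ Q ^ i = 0 := by
    by_cases hf : f = 0
    · rw [hf, zero_divByMonic]
    · refine (divByMonic_eq_zero_iff (hQ.pow i)).mpr ?_
      refine degree_lt_degree ?_
      rw [natDegree_pow]
      calc f.natDegree < i := hi
        _ = i * 1 := (mul_one i).symm
        _ ≤ i * Q.natDegree := Nat.mul_le_mul_left i hd
  rw [tterm, h0, zero_modByMonic, zero_mul, w.map_zero']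

lemma truncVal_eq_inf (hQ : Q.Monic) (hd : 1 ≤ Q.natDegree) (f : Polynomial K) {N : ℕ}
    (h : f.natDegree < N) :
    truncVal w Q f = (Finset.range N).inf (tterm w Q f) := by
  rw [truncVal_eq_inf_tterm]
  refine le_antisymm (Finset.le_inf fun j hj => ?_) (Finset.le_inf fun j hj => ?_)
  · by_cases hjd : j ≤ f.natDegree
    · exact Finset.inf_le (Finset.mem_range.mpr (Nat.lt_succ_of_le hjd))
    · rw [tterm_top w Q hQ hd f (not_le.mp hjd)]; exact le_top
  · exact Finset.inf_le (Finset.mem_range.mpr (lt_of_lt_of_le (Finset.mem_range.mp hj) h))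

lemma truncVal_zero : truncVal w Q 0 = ⊤ := by
  simp [truncVal, zero_divByMonic, zero_modByMonic, w.map_zero']

lemma div_pow_succ (hQ : Q.Monic) (f : Polynomial K) (i : ℕ) :
    f /ₘ Q ^ (i + 1) = (f /ₘ Q) /ₘ Q ^ i := by
  have h1 : f %ₘ Q + Q * (f /ₘ Q) = f := modByMonic_add_div f Q
  have h2 : (f /ₘ Q) %ₘ Q ^ i + Q ^ i * ((f /ₘ Q) /ₘ Q ^ i) = f /ₘ Q :=
    modByMonic_add_div _ (Q ^ i)
  have hdr1 : (f %ₘ Q).degree < Q.degree := degree_modByMonic_lt f hQ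
  have hdr2 : ((f /ₘ Q) %ₘ Q ^ i).degree < (Q ^ i).degree :=
    degree_modByMonic_lt _ (hQ.pow i)
  have hQne : Q.degree ≠ ⊥ := by
    rw [degree_eq_natDegree hQ.ne_zero]; exact WithBot.coe_ne_bot
  have hpow : (Q ^ (i + 1)).degree = Q.degree + (Q ^ i).degree := by
    rw [pow_succ']; exact degree_mul
  have key : (Q * ((f /ₘ Q) %ₘ Q ^ i) + f %ₘ Q) + Q ^ (i + 1) * ((f /ₘ Q) /ₘ Q ^ i) = f ∧
      (Q * ((f /ₘ Q) %ₘ Q ^ i) + f %ₘ Q).degree < (Q ^ (i + 1)).degree := by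
    constructor
    · rw [pow_succ']
      calc Q * ((f /ₘ Q) %ₘ Q ^ i) + f %ₘ Q + Q * Q ^ i * ((f /ₘ Q) /ₘ Q ^ i)
          = f %ₘ Q + Q * ((f /ₘ Q) %ₘ Q ^ i + Q ^ i * ((f /ₘ Q) /ₘ Q ^ i)) := by ring
        _ = f := by rw [h2, h1]
    · refine lt_of_le_of_lt (degree_add_le _ _) (max_lt ?_ ?_)
      · rw [hpow, degree_mul]
        exact WithBot.add_lt_add_left hQne hdr2
      · refine lt_of_lt_of_le hdr1 ?_
        rw [hpow]
        have h0 : (0 : WithBot ℕ) ≤ (Q ^ i).degree :=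
          zero_le_degree_iff.mpr (pow_ne_zero i hQ.ne_zero)
        calc Q.degree = Q.degree + 0 := (add_zero _).symm
          _ ≤ Q.degree + (Q ^ i).degree := add_le_add_right h0 _
  exact (div_modByMonic_unique _ _ (hQ.pow (i + 1)) key).1

lemma tterm_succ (hQ : Q.Monic) (f : Polynomial K) (i : ℕ) :
    tterm w Q f (i + 1) = w.toFun Q + tterm w Q (f /ₘ Q) i := by
  rw [tterm, div_pow_succ Q hQ f i, pow_succ, ← mul_assoc, w.map_mul', add_comm]
  rfl

lemma inf_const_addWT {ι : Type*} (s : Finset ι) (f : ι → WithTop Γ) (c : WithTop Γ) :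
    c + s.inf f = s.inf fun i => c + f i := by
  rw [add_comm, inf_addWT]
  exact Finset.inf_congr rfl fun i _ => add_comm _ _

lemma truncVal_recursion (hQ : Q.Monic) (hd : 1 ≤ Q.natDegree) (f : Polynomial K) :
    truncVal w Q f =
      min (w.toFun (f %ₘ Q)) (w.toFun Q + truncVal w Q (f /ₘ Q)) := by
  set N := f.natDegree + (f /ₘ Q).natDegree + 1 with hN
  have h1 : truncVal w Q f = (Finset.range (N + 1)).inf (tterm w Q f) :=
    truncVal_eq_inf w Q hQ hd f (by omega)
  have h2 : truncVal w Q (f /ₘ Q) = (Finset.range N).inf (tterm w Q (f /ₘ Q)) :=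
    truncVal_eq_inf w Q hQ hd _ (by omega)
  rw [h1, h2, inf_range_succ_zero]
  congr 1
  · rw [tterm, pow_zero, divByMonic_one, mul_one]
  · rw [inf_const_addWT]
    exact Finset.inf_congr rfl fun i _ => tterm_succ w Q hQ f i

lemma truncVal_of_deg_lt (hQ : Q.Monic) (hd : 1 ≤ Q.natDegree) (f : Polynomial K)
    (h : f.degree < Q.degree) : truncVal w Q f = w.toFun f := by
  rw [truncVal_recursion w Q hQ hd f,
    (modByMonic_eq_self_iff hQ).mpr h,
    (divByMonic_eq_zero_iff hQ).mpr h, truncVal_zero, add_top]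
  exact min_eq_left le_top

end Trunc


section Analytic

open Polynomial

variable {Γ : Type*} [AddCommGroup Γ] [LinearOrder Γ] [IsOrderedAddMonoid Γ]

lemma factor_eq_strict {L : Type*} [Field L]
    (vbar : ValOn L Γ) (wbar : ValOn (Polynomial L) Γ)
    (hC : ∀ c : L, wbar.toFun (C c) = vbar.toFun c)
    (a : L) (d : Γ) (hd : wbar.toFun (X - C a) = (d : WithTop Γ))
    (β : L) (h : wbar.toFun (X - C β) < (d : WithTop Γ)) :
    vbar.toFun (a - β) = wbar.toFun (X - C β) := by
  have hsub : (X - C β) + (-(X - C a)) = C (a - β) := by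
    rw [C_sub]; ring
  have h2 : wbar.toFun ((X - C β) + (-(X - C a))) = wbar.toFun (X - C β) :=
    wbar.map_add_of_lt (by rw [wbar.map_neg, hd]; exact h)
  rw [← hC, ← hsub, h2]

lemma factor_eq {L : Type*} [Field L]
    (vbar : ValOn L Γ) (wbar : ValOn (Polynomial L) Γ)
    (hC : ∀ c : L, wbar.toFun (C c) = vbar.toFun c)
    (a : L) (d : Γ) (hd : wbar.toFun (X - C a) = (d : WithTop Γ))
    (β : L) (h : wbar.toFun (X - C β) ≤ (d : WithTop Γ)) :
    min (vbar.toFun (a - β)) (d : WithTop Γ) = wbar.toFun (X - C β) := by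
  rcases lt_or_eq_of_le h with h' | h'
  · rw [factor_eq_strict vbar wbar hC a d hd β h']
    exact min_eq_left h'.le
  · have hsub : (X - C β) + (-(X - C a)) = C (a - β) := by
      rw [C_sub]; ring
    have h3 := wbar.add_min' (X - C β) (-(X - C a))
    rw [wbar.map_neg, hd, hsub, hC, h', min_self] at h3
    rw [min_eq_right h3, h']

lemma UU_taylor_linear {L : Type*} [Field L]
    (vbar : ValOn L Γ) (d : Γ) (a β : L) :
    UU vbar d (taylor a (X - C β)) = min (vbar.toFun (a - β)) (d : WithTop Γ) := by
  have ht : taylor a (X - C β) = X + C (a - β) := by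
    rw [map_sub, taylor_X, taylor_C, C_sub]; ring
  rw [ht, UU, natDegree_X_add_C, inf_range_succ_zero]
  simp [Finset.range_one, coeff_add, coeff_X_zero, coeff_X_one, coeff_C,
    wtt_zero, wtt, vbar.map_one, one_nsmul]

lemma R0 {L : Type*} [Field L] [IsAlgClosed L]
    (vbar : ValOn L Γ) (wbar : ValOn (Polynomial L) Γ)
    (hC : ∀ c : L, wbar.toFun (C c) = vbar.toFun c)
    (a : L) (d : Γ) (hd : wbar.toFun (X - C a) = (d : WithTop Γ))
    (F : Polynomial L) (hF : F ≠ 0)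
    (h : ∀ β ∈ F.roots, wbar.toFun (X - C β) ≤ (d : WithTop Γ)) :
    UU vbar d (taylor a F) = wbar.toFun F := by
  have hsplit : Splits F := IsAlgClosed.splits F
  have hfac := hsplit.eq_prod_roots
  have huv : ∀ G : Polynomial L, (uVal vbar d a).toFun G = UU vbar d (taylor a G) :=
    fun _ => rfl
  rw [← huv]
  conv_lhs => rw [hfac]
  conv_rhs => rw [hfac]
  rw [(uVal vbar d a).map_mul', wbar.map_mul',
    (uVal vbar d a).map_multiset_prod, wbar.map_multiset_prod]
  congr 1
  · rw [huv, taylor_C, UU_C, hC]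
  · rw [Multiset.map_map, Multiset.map_map]
    refine congrArg Multiset.sum (Multiset.map_congr rfl fun β hβ => ?_)
    show (uVal vbar d a).toFun (X - C β) = wbar.toFun (X - C β)
    rw [huv, UU_taylor_linear]
    exact factor_eq vbar wbar hC a d hd β (h β hβ)

lemma R1 {L : Type*} [Field L] [IsAlgClosed L]
    (vbar : ValOn L Γ) (wbar : ValOn (Polynomial L) Γ)
    (hC : ∀ c : L, wbar.toFun (C c) = vbar.toFun c)
    (a : L) (d : Γ) (hd : wbar.toFun (X - C a) = (d : WithTop Γ))
    (F : Polynomial L) (hF : F ≠ 0)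
    (h : ∀ β ∈ F.roots, wbar.toFun (X - C β) < (d : WithTop Γ)) :
    vbar.toFun (F.eval a) = wbar.toFun F := by
  have hsplit : Splits F := IsAlgClosed.splits F
  have hfac := hsplit.eq_prod_roots
  conv_lhs => rw [hfac]
  conv_rhs => rw [hfac]
  rw [eval_mul, eval_C, eval_multiset_prod, vbar.map_mul', wbar.map_mul',
    vbar.map_multiset_prod, wbar.map_multiset_prod]
  simp only [Multiset.map_map]
  congr 1
  · rw [hC]
  · refine congrArg Multiset.sum (Multiset.map_congr rfl fun β hβ => ?_)
    simp only [Function.comp_apply, eval_sub, eval_X, eval_C]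
    exact factor_eq_strict vbar wbar hC a d hd β (h β hβ)

lemma main_eq {K : Type*} [Field K]
    {L : Type*} [Field L] [Algebra K L] [IsAlgClosed L]
    (vbar : ValOn L Γ)
    (w : ValOn (Polynomial K) Γ)
    (wbar : ValOn (Polynomial L) Γ) (hcomm : IsCommonExt wbar w vbar)
    (Q : Polynomial K) (hQ : IsABKP wbar Q) (hdQ : 1 ≤ Q.natDegree)
    (a : L) (ha : a ∈ (Q.map (algebraMap K L)).roots)
    (hamax : ∀ β ∈ (Q.map (algebraMap K L)).roots,
      wbar.toFun (X - C β) ≤ wbar.toFun (X - C a))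
    (d : Γ) (hd : wbar.toFun (X - C a) = (d : WithTop Γ)) :
    ∀ f : Polynomial K,
      truncVal w Q f = (uVal vbar d a).toFun (f.map (algebraMap K L)) := by
  have hQbne : Q.map (algebraMap K L) ≠ 0 := (hQ.1.map (algebraMap K L)).ne_zero
  have hrootsQ : ∀ β ∈ (Q.map (algebraMap K L)).roots,
      wbar.toFun (X - C β) ≤ (d : WithTop Γ) := fun β hβ => hd ▸ hamax β hβ
  have hdeltaQ : delta wbar Q = ((d : WithTop Γ) : WithBot (WithTop Γ)) := by
    have hunfold : delta wbar Q = (((Q.map (algebraMap K L)).roots).map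
        fun α => ((wbar.toFun (X - C α) : WithTop Γ) : WithBot (WithTop Γ))).sup := rfl
    rw [hunfold]
    refine le_antisymm (Multiset.sup_le.mpr ?_) ?_
    · rintro x hx
      obtain ⟨β, hβ, rfl⟩ := Multiset.mem_map.mp hx
      exact WithBot.coe_le_coe.mpr (hrootsQ β hβ)
    · have h1 := Multiset.le_sup (s := ((Q.map (algebraMap K L)).roots).map
        fun α => ((wbar.toFun (X - C α) : WithTop Γ) : WithBot (WithTop Γ)))
        (Multiset.mem_map_of_mem _ ha)
      rwa [hd] at h1
  have hrootslt : ∀ f : Polynomial K, f ≠ 0 → f.degree < Q.degree →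
      ∀ β ∈ (f.map (algebraMap K L)).roots,
        wbar.toFun (X - C β) < (d : WithTop Γ) := by
    intro f hf hdeg β hβ
    have h1 := hQ.2 f hf hdeg
    rw [hdeltaQ] at h1
    have h2 : ((wbar.toFun (X - C β) : WithTop Γ) : WithBot (WithTop Γ)) ≤ delta wbar f :=
      Multiset.le_sup (Multiset.mem_map_of_mem _ hβ)
    exact WithBot.coe_lt_coe.mp (lt_of_le_of_lt h2 h1)
  have hUw : ∀ f : Polynomial K, f ≠ 0 → f.degree < Q.degree →
      (uVal vbar d a).toFun (f.map (algebraMap K L)) = w.toFun f := by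
    intro f hf hdeg
    rw [← hcomm.1 f]
    exact R0 vbar wbar hcomm.2 a d hd _ (map_ne_zero hf)
      (fun β hβ => (hrootslt f hf hdeg β hβ).le)
  have hUQ : (uVal vbar d a).toFun (Q.map (algebraMap K L)) = w.toFun Q := by
    rw [← hcomm.1 Q]
    exact R0 vbar wbar hcomm.2 a d hd _ hQbne hrootsQ
  have haQ : (Q.map (algebraMap K L)).eval a = 0 := (mem_roots'.mp ha).2
  have hkey : ∀ r q : Polynomial K, r.degree < Q.degree →
      (uVal vbar d a).toFun ((r + Q * q).map (algebraMap K L)) =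
        min ((uVal vbar d a).toFun (r.map (algebraMap K L)))
          ((uVal vbar d a).toFun ((Q * q).map (algebraMap K L))) := by
    intro r q hr
    by_cases hq0 : q = 0
    · rw [hq0, mul_zero, add_zero, Polynomial.map_zero, (uVal vbar d a).map_zero']
      exact (min_eq_left le_top).symm
    by_cases hr0 : r = 0
    · rw [hr0, zero_add, Polynomial.map_zero, (uVal vbar d a).map_zero']
      exact (min_eq_right le_top).symm
    have hxr : (uVal vbar d a).toFun (r.map (algebraMap K L)) =
        vbar.toFun ((r.map (algebraMap K L)).eval a) := by
      have e1 := R0 vbar wbar hcomm.2 a d hd _ (map_ne_zero hr0)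
        (fun β hβ => (hrootslt r hr0 hr β hβ).le)
      have e2 := R1 vbar wbar hcomm.2 a d hd _ (map_ne_zero hr0) (hrootslt r hr0 hr)
      have e3 : (uVal vbar d a).toFun (r.map (algebraMap K L)) =
          UU vbar d (taylor a (r.map (algebraMap K L))) := rfl
      rw [e3, e1, ← e2]
    rcases le_or_gt ((uVal vbar d a).toFun (r.map (algebraMap K L)))
      ((uVal vbar d a).toFun ((Q * q).map (algebraMap K L))) with h | h
    · rw [min_eq_left h]
      refine le_antisymm ?_ ?_
      · have h1 : (uVal vbar d a).toFun ((r + Q * q).map (algebraMap K L)) ≤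
            vbar.toFun ((taylor a ((r + Q * q).map (algebraMap K L))).coeff 0) + wtt d 0 :=
          UU_le vbar d _ 0
        rw [taylor_coeff_zero, wtt_zero, add_zero] at h1
        have heval : ((r + Q * q).map (algebraMap K L)).eval a =
            (r.map (algebraMap K L)).eval a := by
          rw [Polynomial.map_add, Polynomial.map_mul, eval_add, eval_mul, haQ,
            zero_mul, add_zero]
        rwa [heval, ← hxr] at h1
      · have h2 := (uVal vbar d a).add_min' (r.map (algebraMap K L))
          ((Q * q).map (algebraMap K L))
        rw [← Polynomial.map_add, min_eq_left h] at h2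
        exact h2
    · rw [min_eq_right h.le]
      have h3 := (uVal vbar d a).map_add_of_lt
        (x := (Q * q).map (algebraMap K L)) (y := r.map (algebraMap K L)) h
      rw [show (r + Q * q).map (algebraMap K L) =
        (Q * q).map (algebraMap K L) + r.map (algebraMap K L) by
          rw [← Polynomial.map_add, add_comm]]
      exact h3
  have H : ∀ (n : ℕ) (f : Polynomial K), f.natDegree ≤ n →
      truncVal w Q f = (uVal vbar d a).toFun (f.map (algebraMap K L)) := by
    intro n
    induction n using Nat.strong_induction_on with
    | _ n ih =>
      intro f hfn
      by_cases hf0 : f = 0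
      · rw [hf0, truncVal_zero, Polynomial.map_zero, (uVal vbar d a).map_zero']
      by_cases hdeg : f.degree < Q.degree
      · rw [truncVal_of_deg_lt w Q hQ.1 hdQ f hdeg]
        exact (hUw f hf0 hdeg).symm
      · have hq0 : f /ₘ Q ≠ 0 := by
          rw [Ne, divByMonic_eq_zero_iff hQ.1]; exact hdeg
        have hQdpos : 0 < Q.degree := by
          rw [degree_eq_natDegree hQ.1.ne_zero]
          exact_mod_cast hdQ
        have hql : (f /ₘ Q).degree < f.degree := degree_divByMonic_lt f Q hf0 hQdpos
        have hqn : (f /ₘ Q).natDegree < f.natDegree := natDegree_lt_natDegree hq0 hql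
        have ihq := ih (f /ₘ Q).natDegree (by omega) (f /ₘ Q) le_rfl
        rw [truncVal_recursion w Q hQ.1 hdQ f]
        rw [show f.map (algebraMap K L) = (f %ₘ Q + Q * (f /ₘ Q)).map (algebraMap K L) by
          rw [modByMonic_add_div f Q]]
        rw [hkey (f %ₘ Q) (f /ₘ Q) (degree_modByMonic_lt f hQ.1)]
        congr 1
        · by_cases hr0 : f %ₘ Q = 0
          · rw [hr0, w.map_zero', Polynomial.map_zero, (uVal vbar d a).map_zero']
          · exact (hUw _ hr0 (degree_modByMonic_lt f hQ.1)).symm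
        · rw [Polynomial.map_mul, (uVal vbar d a).map_mul', hUQ, ← ihq]
  exact fun f => H f.natDegree f le_rfl

end Analytic

/-- if `Q` is an abstract key polynomial for `w`, then the `Q`-truncation
`w_Q` is a valuation on `K(X)`: it is multiplicative and satisfies the ultrametric
inequality on `K[X]`. -/
theorem truncation_is_valuation
    {K : Type*} [Field K] {Γ : Type*} [AddCommGroup Γ] [LinearOrder Γ] [IsOrderedAddMonoid Γ]
    {L : Type*} [Field L] [Algebra K L] [IsAlgClosure K L]
    (v : ValOn K Γ) (vbar : ValOn L Γ)
    (hvbar : ∀ c : K, vbar.toFun (algebraMap K L c) = v.toFun c)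
    (w : ValOn (Polynomial K) Γ) (hext : Extends w v)
    (wbar : ValOn (Polynomial L) Γ) (hcomm : IsCommonExt wbar w vbar)
    (Q : Polynomial K) (hQ : IsABKP wbar Q) :
    ∀ f g : Polynomial K,
      truncVal w Q (f * g) = truncVal w Q f + truncVal w Q g ∧
      min (truncVal w Q f) (truncVal w Q g) ≤ truncVal w Q (f + g) := by
  intro f g
  by_cases hdQ : 1 ≤ Q.natDegree
  · haveI : IsAlgClosed L := IsAlgClosure.isAlgClosed (R := K)
    have hQbne : Q.map (algebraMap K L) ≠ 0 := (hQ.1.map (algebraMap K L)).ne_zero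
    have hdegb : (Q.map (algebraMap K L)).degree ≠ 0 := by
      intro hcon
      have h1 : (Q.map (algebraMap K L)).natDegree = 0 :=
        natDegree_eq_zero_iff_degree_le_zero.mpr (le_of_eq hcon)
      rw [hQ.1.natDegree_map (algebraMap K L)] at h1
      omega
    obtain ⟨a0, ha0⟩ := IsAlgClosed.exists_root (Q.map (algebraMap K L)) hdegb
    have ha0m : a0 ∈ (Q.map (algebraMap K L)).roots := mem_roots'.mpr ⟨hQbne, ha0⟩
    have hmne : ((Q.map (algebraMap K L)).roots.map
        fun α => ((wbar.toFun (X - C α) : WithTop Γ) : WithBot (WithTop Γ))) ≠ 0 := by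
      simp only [ne_eq, Multiset.map_eq_zero]
      intro hcon
      rw [hcon] at ha0m
      exact absurd ha0m (Multiset.notMem_zero a0)
    obtain ⟨b, hbmem, hbsup⟩ := multiset_exists_sup _ hmne
    obtain ⟨a, ham, hab⟩ := Multiset.mem_map.mp hbmem
    have hamax : ∀ β ∈ (Q.map (algebraMap K L)).roots,
        wbar.toFun (X - C β) ≤ wbar.toFun (X - C a) := by
      intro β hβ
      have h1 : ((wbar.toFun (X - C β) : WithTop Γ) : WithBot (WithTop Γ)) ≤ b := by
        rw [← hbsup]
        exact Multiset.le_sup (Multiset.mem_map_of_mem _ hβ)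
      rw [← hab] at h1
      exact WithBot.coe_le_coe.mp h1
    have hne : wbar.toFun (X - C a) ≠ ⊤ := wbar.ne_top' _ (X_sub_C_ne_zero a)
    obtain ⟨d, hd⟩ := WithTop.ne_top_iff_exists.mp hne
    have hmain := main_eq vbar w wbar hcomm Q hQ hdQ a ham hamax d hd.symm
    constructor
    · rw [hmain, hmain, hmain, Polynomial.map_mul, (uVal vbar d a).map_mul']
    · rw [hmain, hmain, hmain, Polynomial.map_add]
      exact (uVal vbar d a).add_min' _ _
  · have hQnd : Q.natDegree = 0 := by omega
    have hQ1 : Q = 1 := hQ.1.natDegree_eq_zero.mp hQnd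
    have htop : ∀ h : Polynomial K, truncVal w Q h = ⊤ := by
      intro h
      rw [truncVal_eq_inf_tterm]
      refine (Finset.inf_eq_top_iff _ _).mpr fun i _ => ?_
      rw [tterm, hQ1, one_pow, modByMonic_one, zero_mul, w.map_zero']
    rw [htop, htop, htop, htop]
    exact ⟨by rw [top_add], le_top⟩

end MLV
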